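/- Let T = (T₁,T₂,T₃) be a solution of Nahm's equations on an open interval I with values in su(n). Let (X₁,X₂,X₃) be the standard basis of so(3), (X_l)_{jk} = −ε_{ljk}. Suppose that for each l ∈ {1,2,3} there is a map U_l : ℝ → SU(n), differentiable at 0 with U_l(0) = I_n, such that for all θ ∈ ℝ, t ∈ I, and i ∈ {1,2,3}: Σ_j exp(θX_l)_{ij} T_j(t) = U_l(θ)⁻¹ Tᵢ(t) U_l(θ). Then the matrices Y_l := U_l′(0) ∈ su(n) satisfy, for all i,j ∈ {1,2,3} and all t ∈ I: [Yᵢ, T_j(t)] = Σ_k ε_{ijk} T_k(t). -/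

import Mathlib

open Matrix Set

/-- The Levi-Civita symbol on three indices. -/
def eps (i j k : Fin 3) : ℝ :=
  if (i, j, k) = (0, 1, 2) ∨ (i, j, k) = (1, 2, 0) ∨ (i, j, k) = (2, 0, 1) then 1
  else if (i, j, k) = (2, 1, 0) ∨ (i, j, k) = (1, 0, 2) ∨ (i, j, k) = (0, 2, 1) then -1
  else 0

/-- The standard basis of 𝔰𝔬(3): `(X l)ⱼₖ = -ε_{ljk}`. -/
def soBasis (l : Fin 3) : Matrix (Fin 3) (Fin 3) ℝ :=
  Matrix.of fun j k => -eps l j k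

/-- `A` is a traceless skew-Hermitian matrix, i.e. an element of 𝔰𝔲(n). -/
def IsSuMat {n : ℕ} (A : Matrix (Fin n) (Fin n) ℂ) : Prop :=
  A.trace = 0 ∧ Aᴴ = -A

lemma exp_entry_hasDerivAt (X : Matrix (Fin 3) (Fin 3) ℝ) (j k : Fin 3) :
    HasDerivAt (fun θ : ℝ => NormedSpace.exp (θ • X) j k) (X j k) 0 := by
  letI : NormedRing (Matrix (Fin 3) (Fin 3) ℝ) := Matrix.linftyOpNormedRing
  letI : NormedAlgebra ℝ (Matrix (Fin 3) (Fin 3) ℝ) := Matrix.linftyOpNormedAlgebra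
  haveI : CompleteSpace (Matrix (Fin 3) (Fin 3) ℝ) :=
    FiniteDimensional.complete ℝ _
  have h := hasDerivAt_exp_smul_const (𝕂 := ℝ) X 0
  rw [zero_smul, NormedSpace.exp_zero, one_mul] at h
  let L : Matrix (Fin 3) (Fin 3) ℝ →ₗ[ℝ] ℝ :=
    { toFun := fun M => M j k, map_add' := fun _ _ => rfl, map_smul' := fun _ _ => rfl }
  exact (LinearMap.toContinuousLinearMap L).hasFDerivAt.comp_hasDerivAt 0 h

lemma det_hasDerivAt_of_one {n : ℕ} (U : ℝ → Matrix (Fin n) (Fin n) ℂ)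
    (hU0 : U 0 = 1) (Y : Matrix (Fin n) (Fin n) ℂ)
    (hY : ∀ p q, HasDerivAt (fun θ => U θ p q) (Y p q) 0) :
    HasDerivAt (fun θ => (U θ).det) Y.trace 0 := by
  have h1 : HasDerivAt (fun θ => ∑ σ : Equiv.Perm (Fin n),
      (Equiv.Perm.sign σ : ℤ) * ∏ i, U θ (σ i) i)
      (∑ σ : Equiv.Perm (Fin n), (Equiv.Perm.sign σ : ℤ) *
        (∑ i, (∏ r ∈ Finset.univ.erase i, U 0 (σ r) r) • Y (σ i) i)) 0 := by
    apply HasDerivAt.fun_sum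
    intro σ _
    exact (HasDerivAt.fun_finsetProd (fun i _ => hY (σ i) i)).const_mul _
  have h2 : (∑ σ : Equiv.Perm (Fin n), ((Equiv.Perm.sign σ : ℤ) : ℂ) *
        (∑ i, (∏ r ∈ Finset.univ.erase i, U 0 (σ r) r) • Y (σ i) i)) = Y.trace := by
    rw [Finset.sum_eq_single 1]
    · simp [hU0, Matrix.one_apply, Matrix.trace]
    · intro σ _ hσ
      have ⟨a, ha⟩ : ∃ a, σ a ≠ a := by
        by_contra h
        push_neg at h
        exact hσ (Equiv.ext h)
      have hsa : σ (σ a) ≠ σ a := fun h => ha (σ.injective (by rw [h]))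
      have hz : ∀ i : Fin n, (∏ r ∈ Finset.univ.erase i, U 0 (σ r) r) = 0 := by
        intro i
        rcases ne_or_eq i a with hia | hia
        · refine Finset.prod_eq_zero (Finset.mem_erase.2 ⟨fun h => hia h.symm, Finset.mem_univ a⟩) ?_
          rw [hU0]; exact Matrix.one_apply_ne ha
        · refine Finset.prod_eq_zero (i := σ a)
            (Finset.mem_erase.2 ⟨by rw [hia]; exact ha, Finset.mem_univ _⟩) ?_
          rw [hU0]; exact Matrix.one_apply_ne hsa
      simp [hz]
    · simp
  rw [← h2]
  exact h1.congr_of_eventuallyEq (Filter.Eventually.of_forall fun θ => by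
    show (U θ).det = _
    rw [Matrix.det_apply'])

/-- If an 𝔰𝔲(n)-valued solution of Nahm's equations is equivariant under
the three one-parameter rotation subgroups `θ ↦ exp(θ Xₗ)`, with gauges `Uₗ(θ) ∈ SU(n)`
differentiable at `0` and `Uₗ(0) = 1`, then the derivatives `Yₗ = Uₗ′(0)` lie in 𝔰𝔲(n)
and satisfy `[Yᵢ, Tⱼ(t)] = Σₖ ε_{ijk} Tₖ(t)`. -/
theorem spherical_symmetry_infinitesimal (n : ℕ) (a b : ℝ)
    (T : Fin 3 → ℝ → Matrix (Fin n) (Fin n) ℂ)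
    (hNahm : ∀ t ∈ Ioo a b, ∀ p q : Fin n,
      HasDerivAt (fun s => T 0 s p q) ((T 1 t * T 2 t - T 2 t * T 1 t) p q) t ∧
      HasDerivAt (fun s => T 1 s p q) ((T 2 t * T 0 t - T 0 t * T 2 t) p q) t ∧
      HasDerivAt (fun s => T 2 s p q) ((T 0 t * T 1 t - T 1 t * T 0 t) p q) t)
    (hsu : ∀ i : Fin 3, ∀ t ∈ Ioo a b, IsSuMat (T i t))
    (U : Fin 3 → ℝ → Matrix (Fin n) (Fin n) ℂ)
    (hUmem : ∀ l : Fin 3, ∀ θ : ℝ, U l θ * (U l θ)ᴴ = 1 ∧ (U l θ).det = 1)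
    (hU0 : ∀ l : Fin 3, U l 0 = 1)
    (Y : Fin 3 → Matrix (Fin n) (Fin n) ℂ)
    (hY : ∀ l : Fin 3, ∀ p q : Fin n, HasDerivAt (fun θ => U l θ p q) (Y l p q) 0)
    (hequiv : ∀ l : Fin 3, ∀ θ : ℝ, ∀ t ∈ Ioo a b, ∀ i : Fin 3,
      ∑ j : Fin 3, (NormedSpace.exp (θ • soBasis l)) i j • T j t =
        (U l θ)⁻¹ * T i t * U l θ) :
    (∀ l : Fin 3, IsSuMat (Y l)) ∧
    ∀ i j : Fin 3, ∀ t ∈ Ioo a b,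
      Y i * T j t - T j t * Y i = ∑ k : Fin 3, eps i j k • T k t := by
  have hdet : ∀ l, (Y l).trace = 0 := by
    intro l
    have h := det_hasDerivAt_of_one (U l) (hU0 l) (Y l) (hY l)
    have h2 : HasDerivAt (fun θ => (U l θ).det) 0 0 :=
      (hasDerivAt_const 0 (1:ℂ)).congr_of_eventuallyEq
        (Filter.Eventually.of_forall fun θ => (hUmem l θ).2)
    exact h.unique h2
  have hskew : ∀ l, (Y l)ᴴ = -(Y l) := by
    intro l
    ext p q
    have hfun : ∀ θ : ℝ, (∑ r, U l θ p r * star (U l θ q r))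
        = (1 : Matrix (Fin n) (Fin n) ℂ) p q := by
      intro θ
      have := congrFun (congrFun ((hUmem l θ).1) p) q
      simpa [Matrix.mul_apply, Matrix.conjTranspose_apply] using this
    have hd : HasDerivAt (fun θ => ∑ r, U l θ p r * star (U l θ q r))
        (∑ r, (Y l p r * star (U l 0 q r) + U l 0 p r * star (Y l q r))) 0 :=
      HasDerivAt.fun_sum fun r _ => (hY l p r).mul ((hY l q r).star)
    have hc : HasDerivAt (fun θ => ∑ r, U l θ p r * star (U l θ q r)) 0 0 :=
      (hasDerivAt_const 0 ((1 : Matrix (Fin n) (Fin n) ℂ) p q)).congr_of_eventuallyEq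
        (Filter.Eventually.of_forall hfun)
    have h0 := hd.unique hc
    rw [hU0 l] at h0
    simp only [Matrix.one_apply, apply_ite (star : ℂ → ℂ), star_one, star_zero,
      mul_ite, mul_one, mul_zero, ite_mul, one_mul, zero_mul,
      Finset.sum_add_distrib, Finset.sum_ite_eq, Finset.sum_ite_eq',
      Finset.mem_univ, if_true] at h0
    have : star (Y l q p) = -(Y l p q) := by linear_combination h0
    simpa [Matrix.conjTranspose_apply, Matrix.neg_apply] using this
  refine ⟨fun l => ⟨hdet l, hskew l⟩, ?_⟩
  intro i j t ht
  have hUinv : ∀ θ, U i θ * (U i θ)⁻¹ = 1 := fun θ =>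
    Matrix.mul_nonsing_inv _ (by rw [(hUmem i θ).2]; exact isUnit_one)
  have hA : ∀ θ, U i θ * (∑ k, (NormedSpace.exp (θ • soBasis i)) j k • T k t)
      = T j t * U i θ := by
    intro θ
    rw [hequiv i θ t ht j, ← Matrix.mul_assoc, ← Matrix.mul_assoc, hUinv θ, Matrix.one_mul]
  have key : Y i * T j t + (∑ k, soBasis i j k • T k t) = T j t * Y i := by
    ext p q
    have hS : ∀ r, HasDerivAt
        (fun θ : ℝ => ∑ k, (NormedSpace.exp (θ • soBasis i)) j k • T k t r q)
        (∑ k, soBasis i j k • T k t r q) 0 :=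
      fun r => HasDerivAt.fun_sum fun k _ => (exp_entry_hasDerivAt (soBasis i) j k).smul_const _
    have hL : HasDerivAt (fun θ : ℝ => ∑ r, U i θ p r *
          (∑ k, (NormedSpace.exp (θ • soBasis i)) j k • T k t r q))
        (∑ r, (Y i p r * (∑ k, ((NormedSpace.exp ((0:ℝ) • soBasis i)) j k) • T k t r q)
          + U i 0 p r * (∑ k, soBasis i j k • T k t r q))) 0 :=
      HasDerivAt.fun_sum fun r _ => (hY i p r).mul (hS r)
    have hR : HasDerivAt (fun θ => ∑ r, T j t p r * U i θ r q)
        (∑ r, T j t p r * Y i r q) 0 :=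
      HasDerivAt.fun_sum fun r _ => (hY i r q).const_mul _
    have hfun : ∀ θ : ℝ, (∑ r, U i θ p r *
        (∑ k, (NormedSpace.exp (θ • soBasis i)) j k • T k t r q))
        = ∑ r, T j t p r * U i θ r q := by
      intro θ
      have := congrFun (congrFun (hA θ) p) q
      simpa [Matrix.mul_apply, Matrix.sum_apply, Matrix.smul_apply] using this
    have h0 := hL.unique (hR.congr_of_eventuallyEq (Filter.Eventually.of_forall hfun))
    rw [hU0 i] at h0
    simp only [zero_smul, NormedSpace.exp_zero, Matrix.one_apply, ite_smul, one_smul,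
      ite_mul, one_mul, zero_mul, mul_ite, mul_one, mul_zero,
      Finset.sum_add_distrib, Finset.sum_ite_eq, Finset.sum_ite_eq',
      Finset.mem_univ, if_true] at h0
    simpa [Matrix.mul_apply, Matrix.add_apply, Matrix.sum_apply, Matrix.smul_apply] using h0
  have hsub : Y i * T j t - T j t * Y i = -(∑ k, soBasis i j k • T k t) := by
    rw [← key]; abel
  rw [hsub, ← Finset.sum_neg_distrib]
  refine Finset.sum_congr rfl fun k _ => ?_
  rw [← neg_smul]
  congr 1
  simp [soBasis]
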